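/- The Gauss hypergeometric series satisfy the duplication formula: as formal power series in u, (1 − u/2)^{1/2} · ₂F₁(1/2, 1/2; 1; u) = ₂F₁(1/4, 3/4; 1; (u/(2−u))²), where (1 − u/2)^{1/2} denotes the binomial series and (u/(2−u))² is expanded as a formal power series with zero constant term. -/

import Mathlib

open PowerSeries

/-- The Gauss hypergeometric series `₂F₁(a,b;1;t) = Σ (a)ₙ(b)ₙ/((1)ₙ n!) tⁿ` as a formal
power series over ℚ. -/
noncomputable def hyp (a b : ℚ) : PowerSeries ℚ :=
  PowerSeries.mk fun n =>
    ((ascPochhammer ℚ n).eval a * (ascPochhammer ℚ n).eval b) /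
      ((ascPochhammer ℚ n).eval 1 * (n.factorial : ℚ))

/-- Composition `F(w(t))` of formal power series, valid when `w` has zero constant term. -/
noncomputable def pscomp (F w : PowerSeries ℚ) : PowerSeries ℚ :=
  PowerSeries.mk fun n => ∑ k ∈ Finset.range (n + 1), coeff (R := ℚ) k F * coeff (R := ℚ) n (w ^ k)

open scoped Polynomial

section comp
variable {w : PowerSeries ℚ} (hw : constantCoeff (R := ℚ) w = 0)
include hw

lemma coeff_w_pow {n k : ℕ} (h : n < k) : coeff (R := ℚ) n (w ^ k) = 0 := by
  have hd : (X : ℚ⟦X⟧) ^ k ∣ w ^ k :=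
    pow_dvd_pow_of_dvd (PowerSeries.X_dvd_iff.mpr hw) k
  exact PowerSeries.X_pow_dvd_iff.mp hd n h

lemma coeff_w_pow_mul (r : ℚ⟦X⟧) (n : ℕ) : coeff (R := ℚ) n (w ^ (n+1) * r) = 0 := by
  have hd : (X : ℚ⟦X⟧) ^ (n+1) ∣ w ^ (n+1) * r :=
    Dvd.dvd.mul_right (pow_dvd_pow_of_dvd (PowerSeries.X_dvd_iff.mpr hw) _) r
  exact PowerSeries.X_pow_dvd_iff.mp hd n (Nat.lt_succ_self n)

lemma coeff_pscomp (F : ℚ⟦X⟧) {n N : ℕ} (h : n < N) :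
    coeff (R := ℚ) n (pscomp F w) = coeff (R := ℚ) n ((trunc N F).eval₂ (C (R := ℚ)) w) := by
  rw [pscomp, coeff_mk, eval₂_trunc_eq_sum_range, map_sum]
  simp only [PowerSeries.coeff_C_mul]
  refine Finset.sum_subset (Finset.range_subset_range.mpr h) fun x hx hnx => ?_
  rw [Finset.mem_range, not_lt] at hnx
  rw [coeff_w_pow hw (by omega), mul_zero]

lemma pscomp_mul (F G : ℚ⟦X⟧) : pscomp (F * G) w = pscomp F w * pscomp G w := by
  ext n
  have hR : coeff (R := ℚ) n (pscomp F w * pscomp G w)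
      = coeff (R := ℚ) n ((trunc (n+1) F).eval₂ (C (R := ℚ)) w * (trunc (n+1) G).eval₂ (C (R := ℚ)) w) := by
    rw [PowerSeries.coeff_mul, PowerSeries.coeff_mul]
    refine Finset.sum_congr rfl fun p hp => ?_
    rw [Finset.HasAntidiagonal.mem_antidiagonal] at hp
    rw [coeff_pscomp hw F (show p.1 < n+1 by omega),
      coeff_pscomp hw G (show p.2 < n+1 by omega)]
  rw [hR, coeff_pscomp hw (F*G) (Nat.lt_succ_self n), ← Polynomial.eval₂_mul]
  obtain ⟨q, hq⟩ : (Polynomial.X : ℚ[X]) ^ (n+1) ∣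
      (trunc (n+1) F * trunc (n+1) G - trunc (n+1) (F * G)) := by
    rw [Polynomial.X_pow_dvd_iff]
    intro d hd
    rw [Polynomial.coeff_sub, PowerSeries.coeff_trunc, if_pos hd, ← Polynomial.coeff_coe,
      Polynomial.coe_mul, ← coeff_mul_eq_coeff_trunc_mul_trunc F G hd, sub_self]
  have : (trunc (n+1) F * trunc (n+1) G) = trunc (n+1) (F*G) + Polynomial.X ^ (n+1) * q := by
    rw [← hq]; ring
  rw [this, Polynomial.eval₂_add, Polynomial.eval₂_mul, Polynomial.eval₂_X_pow, map_add, coeff_w_pow_mul hw, add_zero]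

omit hw in
lemma D_eval₂ (p : ℚ[X]) (u : ℚ⟦X⟧) :
    d⁄dX ℚ (p.eval₂ (C (R := ℚ)) u) = (Polynomial.derivative p).eval₂ (C (R := ℚ)) u * d⁄dX ℚ u := by
  induction p using Polynomial.induction_on' with
  | add f g hf hg => rw [Polynomial.eval₂_add, map_add, hf, hg, Polynomial.derivative_add, Polynomial.eval₂_add]; ring
  | monomial k a =>
    rw [Polynomial.eval₂_monomial, Polynomial.derivative_monomial, Polynomial.eval₂_monomial, Derivation.leibniz,
      Derivation.leibniz_pow, PowerSeries.derivative_C]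
    simp only [smul_eq_mul, smul_zero, add_zero, nsmul_eq_mul]
    rw [map_mul, map_natCast]
    ring

lemma pscomp_D (F : ℚ⟦X⟧) :
    d⁄dX ℚ (pscomp F w) = pscomp (d⁄dX ℚ F) w * d⁄dX ℚ w := by
  ext n
  have hL : coeff (R := ℚ) n (d⁄dX ℚ (pscomp F w))
      = coeff (R := ℚ) n ((trunc (n+1) (d⁄dX ℚ F)).eval₂ (C (R := ℚ)) w * d⁄dX ℚ w) := by
    rw [PowerSeries.coeff_derivative, coeff_pscomp hw F (Nat.lt_succ_self (n+1)),
      ← PowerSeries.coeff_derivative, D_eval₂, trunc_derivative]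
  rw [hL, PowerSeries.coeff_mul, PowerSeries.coeff_mul]
  refine Finset.sum_congr rfl fun p hp => ?_
  rw [Finset.HasAntidiagonal.mem_antidiagonal] at hp
  rw [coeff_pscomp hw (d⁄dX ℚ F) (show p.1 < n+1 by omega)]

lemma pscomp_X : pscomp X w = w := by
  ext n
  rw [pscomp, coeff_mk]
  rw [Finset.sum_eq_single 1]
  · simp
  · intro b _ hb
    rw [PowerSeries.coeff_X, if_neg hb, zero_mul]
  · intro h1
    rw [Finset.mem_range, not_lt] at h1
    obtain rfl : n = 0 := by omega
    simp [PowerSeries.coeff_zero_eq_constantCoeff, hw]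

omit hw

lemma pscomp_C (a : ℚ) : pscomp (C (R := ℚ) a) w = C (R := ℚ) a := by
  ext n
  rw [pscomp, coeff_mk]
  rw [Finset.sum_eq_single 0]
  · simp [PowerSeries.coeff_C, PowerSeries.coeff_one, pow_zero]
  · intro b _ hb
    rw [PowerSeries.coeff_C, if_neg hb, zero_mul]
  · simp

lemma pscomp_one : pscomp 1 w = 1 := by
  rw [← map_one (C (R := ℚ)), pscomp_C, map_one]

lemma pscomp_ofNat (n : ℕ) [n.AtLeastTwo] :
    pscomp (no_index (OfNat.ofNat n)) w = OfNat.ofNat n := by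
  rw [← map_ofNat (C (R := ℚ)) n, pscomp_C, map_ofNat]

lemma pscomp_add (F G : ℚ⟦X⟧) : pscomp (F + G) w = pscomp F w + pscomp G w := by
  ext n
  simp [pscomp, coeff_mk, add_mul, Finset.sum_add_distrib]

lemma pscomp_sub (F G : ℚ⟦X⟧) : pscomp (F - G) w = pscomp F w - pscomp G w := by
  ext n
  simp [pscomp, coeff_mk, sub_mul, Finset.sum_sub_distrib]

end comp

lemma hyp_rec (a b : ℚ) (n : ℕ) :
    ((n : ℚ)+1)^2 * coeff (R := ℚ) (n+1) (hyp a b)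
      = ((n : ℚ)+a) * ((n : ℚ)+b) * coeff (R := ℚ) n (hyp a b) := by
  simp only [hyp, coeff_mk, ascPochhammer_succ_eval, ascPochhammer_eval_one,
    Nat.factorial_succ]
  have hne : ((n.factorial : ℚ)) ≠ 0 := Nat.cast_ne_zero.mpr n.factorial_ne_zero
  have hne2 : ((n : ℚ) + 1) ≠ 0 := by positivity
  field_simp
  push_cast
  ring

lemma constantCoeff_hyp (a b : ℚ) : constantCoeff (R := ℚ) (hyp a b) = 1 := by
  rw [← PowerSeries.coeff_zero_eq_constantCoeff, hyp, coeff_mk]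
  simp

lemma coeff_zero_X_mul' (f : ℚ⟦X⟧) : coeff (R := ℚ) 0 ((X:ℚ⟦X⟧) * f) = 0 := by
  rw [PowerSeries.coeff_zero_eq_constantCoeff, map_mul, constantCoeff_X, zero_mul]

lemma hyp_ODE (a b : ℚ) (hab : a + b = 1) :
    (X:ℚ⟦X⟧)*(1-(X:ℚ⟦X⟧)) * (d⁄dX ℚ (d⁄dX ℚ (hyp a b))) + (1-2*(X:ℚ⟦X⟧)) * (d⁄dX ℚ (hyp a b))
      = C (R := ℚ) (a*b) * hyp a b := by
  have hsplit : ∀ A B : ℚ⟦X⟧, (X:ℚ⟦X⟧)*(1-(X:ℚ⟦X⟧)) * A + (1-2*(X:ℚ⟦X⟧)) * B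
      = ((X:ℚ⟦X⟧)*A + B) - ((X:ℚ⟦X⟧)*((X:ℚ⟦X⟧)*A) + ((X:ℚ⟦X⟧)*B + (X:ℚ⟦X⟧)*B)) := by
    intro A B; ring
  rw [hsplit]
  ext n
  rw [map_sub, map_add, map_add, map_add, PowerSeries.coeff_C_mul]
  match n with
  | 0 =>
    simp only [coeff_zero_X_mul', PowerSeries.coeff_zero_eq_constantCoeff_apply,
      ← PowerSeries.coeff_zero_eq_constantCoeff_apply, PowerSeries.coeff_derivative]
    have h := hyp_rec a b 0
    push_cast at h ⊢
    linear_combination h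
  | 1 =>
    simp only [PowerSeries.coeff_succ_X_mul, coeff_zero_X_mul', PowerSeries.coeff_derivative]
    have h := hyp_rec a b 1
    push_cast at h ⊢
    linear_combination h + (coeff (R := ℚ) 1 (hyp a b)) * hab
  | (m+2) =>
    simp only [PowerSeries.coeff_succ_X_mul, coeff_zero_X_mul', PowerSeries.coeff_derivative]
    have h := hyp_rec a b (m+2)
    push_cast at h ⊢
    linear_combination h + ((m:ℚ)+2) * (coeff (R := ℚ) (m+2) (hyp a b)) * hab

noncomputable def Mop (y : ℚ⟦X⟧) : ℚ⟦X⟧ :=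
  4*(X:ℚ⟦X⟧)*(1-(X:ℚ⟦X⟧))*(2-(X:ℚ⟦X⟧))^2 * (d⁄dX ℚ (d⁄dX ℚ y))
    + 4*(2-(X:ℚ⟦X⟧))*((X:ℚ⟦X⟧)^2-4*(X:ℚ⟦X⟧)+2) * (d⁄dX ℚ y) - 3*(X:ℚ⟦X⟧)*y

lemma Mop_sub (y z : ℚ⟦X⟧) : Mop (y - z) = Mop y - Mop z := by
  simp only [Mop, map_sub]; ring

lemma Mop_eq_zero {y : ℚ⟦X⟧} (hM : Mop y = 0) (h0 : constantCoeff (R := ℚ) y = 0) : y = 0 := by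
  have key : ∀ n : ℕ, (X:ℚ⟦X⟧)^n ∣ y := by
    intro n
    induction n with
    | zero => exact one_dvd y
    | succ n ih =>
      match n, ih with
      | 0, _ => rw [pow_one]; exact PowerSeries.X_dvd_iff.mpr h0
      | 1, ih =>
        rw [PowerSeries.X_pow_dvd_iff]
        intro m hm
        interval_cases m
        · rw [PowerSeries.coeff_zero_eq_constantCoeff_apply]; exact h0
        · -- coeff 1 y = 0 from constant coefficient of Mop y
          have h := congrArg (constantCoeff (R := ℚ)) hM
          simp only [Mop, map_sub, map_add, map_mul, constantCoeff_X, mul_zero, zero_mul,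
            map_zero] at h
          rw [← PowerSeries.coeff_zero_eq_constantCoeff_apply] at h
          simp only [map_sub, map_add, map_mul, map_pow, map_ofNat, constantCoeff_X,
            PowerSeries.coeff_zero_eq_constantCoeff_apply] at h
          rw [← PowerSeries.coeff_zero_eq_constantCoeff_apply, PowerSeries.coeff_derivative] at h
          norm_num at h
          linarith [h]
      | (m+2), ih =>
        obtain ⟨g, rfl⟩ := ih
        have hD1 : d⁄dX ℚ ((X:ℚ⟦X⟧)^(m+2) * g)
            = (X:ℚ⟦X⟧)^(m+2) * d⁄dX ℚ g + C (R := ℚ) ((m:ℚ)+2) * ((X:ℚ⟦X⟧)^(m+1) * g) := by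
          rw [Derivation.leibniz, Derivation.leibniz_pow, PowerSeries.derivative_X]
          simp only [smul_eq_mul, nsmul_eq_mul, show m+2-1 = m+1 from rfl, show m+1-1 = m from rfl, mul_one]
          rw [show ((m+2 : ℕ) : ℚ⟦X⟧) = C (R := ℚ) ((m:ℚ)+2) by rw [← map_natCast (C (R := ℚ)) (m+2)]; congr 1; push_cast; ring]
          ring
        have hD1' : d⁄dX ℚ ((X:ℚ⟦X⟧)^(m+1) * g)
            = (X:ℚ⟦X⟧)^(m+1) * d⁄dX ℚ g + C (R := ℚ) ((m:ℚ)+1) * ((X:ℚ⟦X⟧)^m * g) := by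
          rw [Derivation.leibniz, Derivation.leibniz_pow, PowerSeries.derivative_X]
          simp only [smul_eq_mul, nsmul_eq_mul, show m+2-1 = m+1 from rfl, show m+1-1 = m from rfl, mul_one]
          rw [show ((m+1 : ℕ) : ℚ⟦X⟧) = C (R := ℚ) ((m:ℚ)+1) by rw [← map_natCast (C (R := ℚ)) (m+1)]; congr 1; push_cast; ring]
          ring
        have hD2 : d⁄dX ℚ (d⁄dX ℚ ((X:ℚ⟦X⟧)^(m+2) * g))
            = (X:ℚ⟦X⟧)^(m+2) * d⁄dX ℚ (d⁄dX ℚ g)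
              + 2 * C (R := ℚ) ((m:ℚ)+2) * ((X:ℚ⟦X⟧)^(m+1) * d⁄dX ℚ g)
              + C (R := ℚ) ((m:ℚ)+2) * C (R := ℚ) ((m:ℚ)+1) * ((X:ℚ⟦X⟧)^m * g) := by
          rw [hD1, map_add, Derivation.leibniz, Derivation.leibniz_pow,
            PowerSeries.derivative_X, Derivation.leibniz, PowerSeries.derivative_C, hD1']
          simp only [smul_eq_mul, nsmul_eq_mul, show m+2-1 = m+1 from rfl, show m+1-1 = m from rfl, mul_one, smul_zero]
          rw [show ((m+2 : ℕ) : ℚ⟦X⟧) = C (R := ℚ) ((m:ℚ)+2) by rw [← map_natCast (C (R := ℚ)) (m+2)]; congr 1; push_cast; ring]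
          ring
        set E : ℚ⟦X⟧ :=
          (16 - 32*(X:ℚ⟦X⟧) + 20*(X:ℚ⟦X⟧)^2 - 4*(X:ℚ⟦X⟧)^3)
              * ((X:ℚ⟦X⟧)^2 * d⁄dX ℚ (d⁄dX ℚ g)
                + 2 * C (R := ℚ) ((m:ℚ)+2) * ((X:ℚ⟦X⟧) * d⁄dX ℚ g)
                + C (R := ℚ) ((m:ℚ)+2) * C (R := ℚ) ((m:ℚ)+1) * g)
            + (16 - 40*(X:ℚ⟦X⟧) + 24*(X:ℚ⟦X⟧)^2 - 4*(X:ℚ⟦X⟧)^3)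
              * ((X:ℚ⟦X⟧) * d⁄dX ℚ g + C (R := ℚ) ((m:ℚ)+2) * g)
            - 3*(X:ℚ⟦X⟧)^2*g with hE
        have hfac : Mop ((X:ℚ⟦X⟧)^(m+2) * g) = (X:ℚ⟦X⟧)^(m+1) * E := by
          rw [Mop, hD2, hD1, hE]; ring
        have hE0 : E = 0 := by
          have := hfac.symm.trans hM
          rcases mul_eq_zero.mp this with h | h
          · exact absurd h (pow_ne_zero _ PowerSeries.X_ne_zero)
          · exact h
        have hg0 : constantCoeff (R := ℚ) g = 0 := by
          have hc := congrArg (constantCoeff (R := ℚ)) hE0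
          simp only [hE, map_sub, map_add, map_mul, map_pow, map_ofNat, constantCoeff_X,
            constantCoeff_C, map_zero, zero_mul, mul_zero, zero_pow, ne_eq,
            OfNat.ofNat_ne_zero, not_false_eq_true, zero_add, add_zero, sub_zero] at hc
          have hne : (16:ℚ) * (((m:ℚ)+2) * (((m:ℚ)+1)+1)) ≠ 0 := by positivity
          have : (16:ℚ) * (((m:ℚ)+2) * (((m:ℚ)+1)+1)) * constantCoeff (R := ℚ) g = 0 := by
            linear_combination hc
          exact (mul_eq_zero.mp this).resolve_left hne
        obtain ⟨g', rfl⟩ := PowerSeries.X_dvd_iff.mpr hg0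
        exact ⟨g', by ring⟩
  ext n
  rw [map_zero]
  exact PowerSeries.X_pow_dvd_iff.mp (key (n+1)) n (Nat.lt_succ_self n)

/-- Duplication formula: `(1 − u/2)^{1/2} · ₂F₁(1/2,1/2;1;u) = ₂F₁(1/4,3/4;1;(u/(2−u))²)`,
where `s` is the binomial series `(1 − u/2)^{1/2}` (characterized by `s(0)=1`, `s² = 1 − u/2`)
and `v = u/(2−u)` is the power series with `(2 − u)·v = u`. -/
theorem hypergeom_duplication (s v : PowerSeries ℚ)
    (hs0 : constantCoeff (R := ℚ) s = 1)
    (hs : s ^ 2 = 1 - PowerSeries.C (R := ℚ) (1 / 2) * X)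
    (hv : (2 - X) * v = X) :
    s * hyp (1 / 2) (1 / 2) = pscomp (hyp (1 / 4) (3 / 4)) (v ^ 2) := by
  set F := hyp (1/2) (1/2) with hFdef
  set H := hyp (1/4) (3/4) with hHdef
  have hw : constantCoeff (R := ℚ) (v^2) = 0 := by
    have h := congrArg (constantCoeff (R := ℚ)) hv
    simp only [map_mul, map_sub, constantCoeff_X, map_ofNat, sub_zero] at h
    have hv0 : constantCoeff (R := ℚ) v = 0 := by linarith
    simp [map_pow, hv0]
  set G := pscomp H (v^2) with hGdef
  -- scaled ODEs
  have hF : 4 * ((X:ℚ⟦X⟧)*(1-(X:ℚ⟦X⟧)) * (d⁄dX ℚ (d⁄dX ℚ F)) + (1-2*(X:ℚ⟦X⟧)) * (d⁄dX ℚ F))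
      = F := by
    rw [hyp_ODE (1/2) (1/2) (by norm_num), show (4:ℚ⟦X⟧) = C (R := ℚ) 4 from (map_ofNat _ 4).symm,
      ← mul_assoc, ← map_mul]
    norm_num
    rfl
  have hH : 16 * ((X:ℚ⟦X⟧)*(1-(X:ℚ⟦X⟧)) * (d⁄dX ℚ (d⁄dX ℚ H)) + (1-2*(X:ℚ⟦X⟧)) * (d⁄dX ℚ H))
      = 3 * H := by
    rw [hyp_ODE (1/4) (3/4) (by norm_num), show (16:ℚ⟦X⟧) = C (R := ℚ) 16 from (map_ofNat _ 16).symm,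
      ← mul_assoc, ← map_mul, show (3:ℚ⟦X⟧) = C (R := ℚ) 3 from (map_ofNat _ 3).symm]
    norm_num
    rfl
  -- relations for s
  have hC2 : (2:ℚ⟦X⟧) * C (R := ℚ) (1/2) = 1 := by
    rw [show (2:ℚ⟦X⟧) = C (R := ℚ) 2 from (map_ofNat _ 2).symm, ← map_mul]
    norm_num
  have r1 : 2 * s^2 = 2 - (X:ℚ⟦X⟧) := by
    rw [hs]; linear_combination (-(X:ℚ⟦X⟧)) * hC2
  have r2 : 4 * (s * d⁄dX ℚ s) = -1 := by
    have h := congrArg (d⁄dX ℚ) hs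
    rw [Derivation.leibniz_pow, map_sub, Derivation.leibniz, PowerSeries.derivative_C,
      PowerSeries.derivative_X, Derivation.map_one_eq_zero] at h
    simp only [smul_eq_mul, nsmul_eq_mul, pow_one, smul_zero, mul_one, mul_zero, add_zero,
      zero_sub, Nat.cast_ofNat] at h
    linear_combination 2*h - hC2
  have hD4 : d⁄dX ℚ (4:ℚ⟦X⟧) = 0 := by
    rw [← map_ofNat (C (R := ℚ)) 4, PowerSeries.derivative_C]
  have r3 : (d⁄dX ℚ s) * (d⁄dX ℚ s) + s * (d⁄dX ℚ (d⁄dX ℚ s)) = 0 := by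
    have h := congrArg (d⁄dX ℚ) r2
    rw [Derivation.leibniz, hD4, Derivation.leibniz, map_neg, Derivation.map_one_eq_zero] at h
    simp only [smul_eq_mul, smul_zero, mul_zero, add_zero, zero_add, neg_zero] at h
    have h4ne : (4:ℚ⟦X⟧) ≠ 0 := by
      intro hh
      have := congrArg (constantCoeff (R := ℚ)) hh
      rw [map_ofNat, map_zero] at this
      norm_num at this
    have h' : s * d⁄dX ℚ (d⁄dX ℚ s) + d⁄dX ℚ s * d⁄dX ℚ s = 0 :=
      (mul_eq_zero.mp h).resolve_left h4ne
    linear_combination h'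
  have hA : 4 * s^4 = (2-(X:ℚ⟦X⟧))^2 := by
    linear_combination (2*s^2 + (2-(X:ℚ⟦X⟧))) * r1
  have hB : 8 * (s^3 * d⁄dX ℚ s) = -(2-(X:ℚ⟦X⟧)) := by
    linear_combination 2*s^2 * r2 - r1
  have hC : 16 * (s^3 * d⁄dX ℚ (d⁄dX ℚ s)) = -1 := by
    linear_combination 16*s^2 * r3 + (1 - 4*(s * d⁄dX ℚ s)) * r2
  -- LHS satisfies Mop = 0
  have hMF : Mop (s * F) = 0 := by
    have hd1 : d⁄dX ℚ (s*F) = s * d⁄dX ℚ F + F * d⁄dX ℚ s := by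
      rw [Derivation.leibniz]; simp [smul_eq_mul]
    have hd2 : d⁄dX ℚ (d⁄dX ℚ (s*F)) = s * (d⁄dX ℚ (d⁄dX ℚ F))
        + 2*(d⁄dX ℚ s * d⁄dX ℚ F) + F * (d⁄dX ℚ (d⁄dX ℚ s)) := by
      rw [hd1, map_add, Derivation.leibniz, Derivation.leibniz]
      simp only [smul_eq_mul]; ring
    have key : (16*s^3) * Mop (s*F) = 0 := by
      rw [Mop, hd2, hd1]
      linear_combination
        (4*(4*(X:ℚ⟦X⟧)*(1-(X:ℚ⟦X⟧))*(2-(X:ℚ⟦X⟧))^2)*(d⁄dX ℚ (d⁄dX ℚ F))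
          + 4*(4*(2-(X:ℚ⟦X⟧))*((X:ℚ⟦X⟧)^2-4*(X:ℚ⟦X⟧)+2))*(d⁄dX ℚ F)
          - 12*(X:ℚ⟦X⟧)*F) * hA
        + (4*(4*(X:ℚ⟦X⟧)*(1-(X:ℚ⟦X⟧))*(2-(X:ℚ⟦X⟧))^2)*(d⁄dX ℚ F)
          + 2*(4*(2-(X:ℚ⟦X⟧))*((X:ℚ⟦X⟧)^2-4*(X:ℚ⟦X⟧)+2))*F) * hB
        + ((4*(X:ℚ⟦X⟧)*(1-(X:ℚ⟦X⟧))*(2-(X:ℚ⟦X⟧))^2)*F) * hC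
        + 4*(2-(X:ℚ⟦X⟧))^4 * hF
    have hne : (16*s^3 : ℚ⟦X⟧) ≠ 0 := by
      intro hh
      have := congrArg (constantCoeff (R := ℚ)) hh
      rw [map_mul, map_pow, hs0, map_ofNat, map_zero] at this
      norm_num at this
    exact (mul_eq_zero.mp key).resolve_left hne
  -- relations for v
  have hD2c : d⁄dX ℚ (2:ℚ⟦X⟧) = 0 := by
    rw [← map_ofNat (C (R := ℚ)) 2, PowerSeries.derivative_C]
  have q1 : (2-(X:ℚ⟦X⟧)) * v = X := hv
  have hv' : (2-(X:ℚ⟦X⟧)) * d⁄dX ℚ v = 1 + v := by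
    have h := congrArg (d⁄dX ℚ) hv
    rw [Derivation.leibniz, map_sub, hD2c, PowerSeries.derivative_X] at h
    simp only [smul_eq_mul, zero_sub, mul_neg, mul_one] at h
    linear_combination h
  have q2 : (2-(X:ℚ⟦X⟧))^2 * d⁄dX ℚ v = 2 := by
    linear_combination (2-(X:ℚ⟦X⟧)) * hv' + q1
  have q3 : (2-(X:ℚ⟦X⟧))^3 * d⁄dX ℚ (d⁄dX ℚ v) = 4 := by
    have h := congrArg (d⁄dX ℚ) q2
    rw [Derivation.leibniz, Derivation.leibniz_pow, map_sub, hD2c,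
      PowerSeries.derivative_X] at h
    simp only [smul_eq_mul, nsmul_eq_mul, pow_one, zero_sub, mul_neg, mul_one, Nat.cast_ofNat,
      show (2:ℕ)-1 = 1 from rfl] at h
    linear_combination (2-(X:ℚ⟦X⟧)) * h + 2*q2
  -- derived relations
  have k1 : (2-(X:ℚ⟦X⟧))^2 * v^2 = (X:ℚ⟦X⟧)^2 := by
    linear_combination ((2-(X:ℚ⟦X⟧))*v + (X:ℚ⟦X⟧)) * q1
  have k2 : (2-(X:ℚ⟦X⟧))^4 * v^4 = (X:ℚ⟦X⟧)^4 := by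
    linear_combination ((2-(X:ℚ⟦X⟧))^2*v^2 + (X:ℚ⟦X⟧)^2) * k1
  have k3 : (2-(X:ℚ⟦X⟧))^4 * (d⁄dX ℚ v)^2 = 4 := by
    linear_combination ((2-(X:ℚ⟦X⟧))^2*(d⁄dX ℚ v) + 2) * q2
  have k4 : (2-(X:ℚ⟦X⟧))^6 * (v^2*(d⁄dX ℚ v)^2) = 4*(X:ℚ⟦X⟧)^2 := by
    linear_combination ((2-(X:ℚ⟦X⟧))^2*v^2) * k3 + 4*k1
  have k5 : (2-(X:ℚ⟦X⟧))^4 * (v * d⁄dX ℚ (d⁄dX ℚ v)) = 4*(X:ℚ⟦X⟧) := by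
    linear_combination ((2-(X:ℚ⟦X⟧))^3 * d⁄dX ℚ (d⁄dX ℚ v)) * q1 + (X:ℚ⟦X⟧)*q3
  have k6 : (2-(X:ℚ⟦X⟧))^3 * (v * d⁄dX ℚ v) = 2*(X:ℚ⟦X⟧) := by
    linear_combination ((2-(X:ℚ⟦X⟧))^2 * d⁄dX ℚ v) * q1 + (X:ℚ⟦X⟧)*q2
  -- transfer ODE through pscomp
  have hE := congrArg (fun t => pscomp t (v^2)) hH
  simp only [pscomp_mul hw, pscomp_sub, pscomp_add, pscomp_X hw, pscomp_one,
    pscomp_ofNat] at hE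
  -- derivatives of G
  have hw1 : d⁄dX ℚ (v^2) = v * d⁄dX ℚ v + v * d⁄dX ℚ v := by
    rw [Derivation.leibniz_pow]
    simp only [smul_eq_mul, nsmul_eq_mul, pow_one, Nat.cast_ofNat, show (2:ℕ)-1 = 1 from rfl]
    ring
  have hw2 : d⁄dX ℚ (d⁄dX ℚ (v^2)) = 2*(d⁄dX ℚ v * d⁄dX ℚ v) + 2*(v * d⁄dX ℚ (d⁄dX ℚ v)) := by
    rw [hw1, map_add, Derivation.leibniz]
    simp only [smul_eq_mul]; ring
  have hg1 : d⁄dX ℚ G = pscomp (d⁄dX ℚ H) (v^2) * d⁄dX ℚ (v^2) := pscomp_D hw H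
  have hg2 : d⁄dX ℚ (d⁄dX ℚ G) = pscomp (d⁄dX ℚ (d⁄dX ℚ H)) (v^2) * (d⁄dX ℚ (v^2) * d⁄dX ℚ (v^2))
      + pscomp (d⁄dX ℚ H) (v^2) * (d⁄dX ℚ (d⁄dX ℚ (v^2))) := by
    rw [hg1, Derivation.leibniz, pscomp_D hw]
    simp only [smul_eq_mul]; ring
  have hMG : Mop G = 0 := by
    have key : (2-(X:ℚ⟦X⟧))^6 * Mop G = 0 := by
      rw [Mop, hg2, hg1, hw2, hw1]
      linear_combination
        ((X:ℚ⟦X⟧)*(2-(X:ℚ⟦X⟧))^6) * hE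
        + (4*(4*(X:ℚ⟦X⟧)*(1-(X:ℚ⟦X⟧))*(2-(X:ℚ⟦X⟧))^2)*(pscomp (d⁄dX ℚ (d⁄dX ℚ H)) (v^2))) * k4
        + (2*(4*(X:ℚ⟦X⟧)*(1-(X:ℚ⟦X⟧))*(2-(X:ℚ⟦X⟧))^2)*(2-(X:ℚ⟦X⟧))^2*(pscomp (d⁄dX ℚ H) (v^2))) * k3
        + (2*(4*(X:ℚ⟦X⟧)*(1-(X:ℚ⟦X⟧))*(2-(X:ℚ⟦X⟧))^2)*(2-(X:ℚ⟦X⟧))^2*(pscomp (d⁄dX ℚ H) (v^2))) * k5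
        + (2*(4*(2-(X:ℚ⟦X⟧))*((X:ℚ⟦X⟧)^2-4*(X:ℚ⟦X⟧)+2))*(2-(X:ℚ⟦X⟧))^3*(pscomp (d⁄dX ℚ H) (v^2))) * k6
        + ((-16)*(X:ℚ⟦X⟧)*(2-(X:ℚ⟦X⟧))^4*(pscomp (d⁄dX ℚ (d⁄dX ℚ H)) (v^2))
            + 32*(X:ℚ⟦X⟧)*(2-(X:ℚ⟦X⟧))^4*(pscomp (d⁄dX ℚ H) (v^2))) * k1
        + (16*(X:ℚ⟦X⟧)*(2-(X:ℚ⟦X⟧))^2*(pscomp (d⁄dX ℚ (d⁄dX ℚ H)) (v^2))) * k2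
    have hne : ((2-(X:ℚ⟦X⟧))^6 : ℚ⟦X⟧) ≠ 0 := by
      intro hh
      have := congrArg (constantCoeff (R := ℚ)) hh
      rw [map_pow, map_sub, constantCoeff_X, map_ofNat, map_zero] at this
      norm_num at this
    exact (mul_eq_zero.mp key).resolve_left hne
  -- conclude
  have hG0 : constantCoeff (R := ℚ) G = 1 := by
    rw [hGdef, ← PowerSeries.coeff_zero_eq_constantCoeff_apply, pscomp, coeff_mk,
      Finset.sum_range_one, pow_zero]
    rw [hHdef]
    simp [PowerSeries.coeff_zero_eq_constantCoeff_apply, PowerSeries.coeff_one, constantCoeff_hyp]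
  have h0 : constantCoeff (R := ℚ) (s*F - G) = 0 := by
    rw [map_sub, map_mul, hs0, hFdef, constantCoeff_hyp, hG0]
    norm_num
  have hz : Mop (s*F - G) = 0 := by rw [Mop_sub, hMF, hMG, sub_zero]
  have := Mop_eq_zero hz h0
  exact sub_eq_zero.mp this
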